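/- There is a constant C such that for every real ν ≥ 1 and every real r with 0 < r ≤ ν/2, one has |J_ν(r)| ≤ C / ν. -/

import Mathlib

open Real

/-- The Bessel function of the first kind of real order `ν`, defined for `x ≥ 0` by the
convergent power series `J_ν(x) = ∑_{m=0}^∞ (-1)^m / (m! Γ(m+ν+1)) (x/2)^{2m+ν}`
(with real exponents interpreted via `Real.rpow`, so that `J_ν(0) = 0` for `ν > 0` and
`J_0(0) = 1`). -/
noncomputable def besselJ (ν x : ℝ) : ℝ :=
  ∑' m : ℕ, ((-1 : ℝ) ^ m / (m.factorial * Real.Gamma (m + ν + 1))) * (x / 2) ^ (2 * (m : ℝ) + ν)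

/-- Lower bound `Γ(m+ν+1) ≥ ν^m Γ(ν+1)`. -/
lemma gamma_lower_aux (ν : ℝ) (hν : 0 < ν) :
    ∀ m : ℕ, ν ^ m * Real.Gamma (ν + 1) ≤ Real.Gamma ((m : ℝ) + ν + 1) := by
  intro m
  induction m with
  | zero => simp
  | succ m ih =>
      have h1 : ((m + 1 : ℕ) : ℝ) + ν + 1 = ((m : ℝ) + ν + 1) + 1 := by push_cast; ring
      have h2 : ((m : ℝ) + ν + 1) ≠ 0 := by positivity
      rw [h1, Real.Gamma_add_one h2]
      have hpos : 0 < Real.Gamma ((m : ℝ) + ν + 1) :=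
        Real.Gamma_pos_of_pos (by positivity)
      have hle : ν ≤ (m : ℝ) + ν + 1 := by
        have : (0:ℝ) ≤ m := Nat.cast_nonneg m
        linarith
      calc ν ^ (m+1) * Real.Gamma (ν + 1) = ν * (ν ^ m * Real.Gamma (ν + 1)) := by ring
        _ ≤ ν * Real.Gamma ((m : ℝ) + ν + 1) := by
            exact mul_le_mul_of_nonneg_left ih hν.le
        _ ≤ ((m : ℝ) + ν + 1) * Real.Gamma ((m : ℝ) + ν + 1) :=
            mul_le_mul_of_nonneg_right hle hpos.le

/-- Stirling-type lower bound `Γ(ν+1) ≥ ν^(ν-1) e^(-ν)` for `ν ≥ 1`. -/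
lemma gamma_stirling_aux (ν : ℝ) (hν : 1 ≤ ν) :
    ν ^ (ν - 1) * Real.exp (-ν) ≤ Real.Gamma (ν + 1) := by
  set n := ⌊ν⌋₊ with hn
  have hν0 : (0:ℝ) < ν := lt_of_lt_of_le one_pos hν
  have hn1 : 1 ≤ n := Nat.le_floor (by exact_mod_cast hν)
  have hnν : (n : ℝ) ≤ ν := Nat.floor_le hν0.le
  have hνn : ν < (n : ℝ) + 1 := Nat.lt_floor_add_one ν
  -- Γ(ν+1) ≥ n!
  have hmono : Real.Gamma ((n : ℝ) + 1) ≤ Real.Gamma (ν + 1) := by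
    have h2a : ((n : ℝ) + 1) ∈ Set.Ici (2:ℝ) := by
      simp only [Set.mem_Ici]
      have : (1:ℝ) ≤ (n : ℝ) := by exact_mod_cast hn1
      linarith
    have h2b : (ν + 1) ∈ Set.Ici (2:ℝ) := by
      simp only [Set.mem_Ici]; linarith
    exact Real.Gamma_strictMonoOn_Ici.monotoneOn h2a h2b (by linarith)
  have hfact : Real.Gamma ((n : ℝ) + 1) = (n.factorial : ℝ) :=
    Real.Gamma_nat_eq_factorial n
  -- n! ≥ ν^n e^(-ν)
  have hexp : ν ^ n / (n.factorial : ℝ) ≤ Real.exp ν :=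
    Real.pow_div_factorial_le_exp ν hν0.le n
  have hfpos : (0:ℝ) < (n.factorial : ℝ) := by exact_mod_cast n.factorial_pos
  have hfl : ν ^ n * Real.exp (-ν) ≤ (n.factorial : ℝ) := by
    rw [Real.exp_neg]
    rw [div_le_iff₀ hfpos] at hexp
    have hepos : (0:ℝ) < Real.exp ν := Real.exp_pos ν
    rw [mul_inv_le_iff₀ hepos]
    linarith [hexp]
  -- ν^(ν-1) ≤ ν^n
  have hpow : ν ^ (ν - 1) ≤ ν ^ n := by
    rw [← Real.rpow_natCast ν n]
    exact Real.rpow_le_rpow_of_exponent_le hν (by linarith)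
  calc ν ^ (ν - 1) * Real.exp (-ν) ≤ ν ^ n * Real.exp (-ν) :=
        mul_le_mul_of_nonneg_right hpow (Real.exp_pos _).le
    _ ≤ (n.factorial : ℝ) := hfl
    _ = Real.Gamma ((n : ℝ) + 1) := hfact.symm
    _ ≤ Real.Gamma (ν + 1) := hmono

set_option maxHeartbeats 1000000 in
/-- **Decay of Bessel functions below the turning point:** there is a constant `C` such
that `|J_ν(r)| ≤ C / ν` for all `ν ≥ 1` and `0 < r ≤ ν/2`. -/
theorem besselJ_decay_small_argument :
    ∃ C : ℝ, 0 < C ∧ ∀ ν r : ℝ, 1 ≤ ν → 0 < r → r ≤ ν / 2 →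
      |besselJ ν r| ≤ C / ν := by
  refine ⟨32, by norm_num, fun ν r hν hr hrν => ?_⟩
  have hν0 : (0:ℝ) < ν := lt_of_lt_of_le one_pos hν
  set A : ℝ := (r/2) ^ ν / Real.Gamma (ν + 1) with hA
  set B : ℝ := r^2 / (4*ν) with hB
  have hΓpos : 0 < Real.Gamma (ν + 1) := Real.Gamma_pos_of_pos (by positivity)
  have hA0 : 0 ≤ A := by
    apply div_nonneg _ hΓpos.le
    exact Real.rpow_nonneg (by positivity) ν
  have hB0 : 0 ≤ B := by positivity
  set a : ℕ → ℝ := fun m =>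
    ((-1 : ℝ) ^ m / (m.factorial * Real.Gamma (m + ν + 1))) * (r / 2) ^ (2 * (m : ℝ) + ν)
    with ha
  set b : ℕ → ℝ := fun m => A * (B ^ m / m.factorial) with hbdef
  -- pointwise bound |a m| ≤ b m
  have hab : ∀ m, |a m| ≤ b m := by
    intro m
    have hΓm : 0 < Real.Gamma ((m : ℝ) + ν + 1) := Real.Gamma_pos_of_pos (by positivity)
    have hfpos : (0:ℝ) < (m.factorial : ℝ) := by exact_mod_cast m.factorial_pos
    have hr2 : (0:ℝ) < r/2 := by linarith
    -- rewrite the rpow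
    have hsplit : (r / 2 : ℝ) ^ (2 * (m : ℝ) + ν) = (r^2/4) ^ m * (r/2) ^ ν := by
      rw [Real.rpow_add hr2]
      congr 1
      have : (2 * (m : ℝ)) = ((2 * m : ℕ) : ℝ) := by push_cast; ring
      rw [this, Real.rpow_natCast, pow_mul]
      ring_nf
    have habs : |a m| = (r^2/4) ^ m * (r/2) ^ ν / ((m.factorial : ℝ) * Real.Gamma ((m:ℝ) + ν + 1)) := by
      rw [ha]
      simp only []
      rw [abs_mul, abs_div, abs_pow, abs_neg, abs_one, one_pow]
      rw [hsplit]
      rw [abs_of_pos (by positivity : (0:ℝ) < (m.factorial : ℝ) * Real.Gamma ((m:ℝ) + ν + 1))]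
      rw [abs_of_nonneg (by positivity : (0:ℝ) ≤ (r^2/4) ^ m * (r/2) ^ ν)]
      ring
    rw [habs]
    simp only [hbdef]
    have hbm : A * (B ^ m / m.factorial)
        = (r^2/4) ^ m * (r/2) ^ ν / ((m.factorial : ℝ) * (ν ^ m * Real.Gamma (ν + 1))) := by
      rw [hA, hB]
      rw [div_pow, mul_pow]
      have h4 : ((4:ℝ)*ν) ^ m = 4^m * ν^m := by rw [mul_pow]
      field_simp
      ring_nf
      rw [mul_assoc, ← mul_pow]; norm_num
    rw [hbm]
    apply div_le_div_of_nonneg_left (by positivity) (by positivity)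
    exact mul_le_mul_of_nonneg_left (gamma_lower_aux ν hν0 m) hfpos.le
  -- summability of b
  have hbsum : Summable b := (Real.summable_pow_div_factorial B).mul_left A
  have hasum : Summable fun m => |a m| :=
    Summable.of_nonneg_of_le (fun m => abs_nonneg _) hab hbsum
  have hasum' : Summable a := hasum.of_abs
  -- tsum of b
  have htsumb : ∑' m, b m = A * Real.exp B := by
    rw [hbdef, tsum_mul_left]
    congr 1
    rw [Real.exp_eq_exp_ℝ, NormedSpace.exp_eq_tsum_div]
  have hJ : besselJ ν r = ∑' m, a m := by rw [besselJ, ha]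
  have h1 : |besselJ ν r| ≤ A * Real.exp B := by
    rw [hJ]
    have hns : Summable fun m => ‖a m‖ := by
      simp only [Real.norm_eq_abs]; exact hasum
    calc |∑' m, a m| ≤ ∑' m, |a m| := by
          have := norm_tsum_le_tsum_norm hns
          simpa only [Real.norm_eq_abs] using this
      _ ≤ ∑' m, b m := Summable.tsum_le_tsum hab hasum hbsum
      _ = A * Real.exp B := htsumb
  -- bound A * exp B
  have hBle : B ≤ ν / 16 := by
    rw [hB]
    rw [div_le_div_iff₀ (by positivity) (by norm_num : (0:ℝ) < 16)]
    nlinarith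
  have hAle : A ≤ (ν/4) ^ ν / Real.Gamma (ν + 1) := by
    rw [hA]
    have hnum : (r/2) ^ ν ≤ (ν/4) ^ ν :=
      Real.rpow_le_rpow (by positivity) (by linarith) hν0.le
    gcongr
  have h2 : |besselJ ν r| ≤ (ν/4) ^ ν * Real.exp (ν/16) / Real.Gamma (ν + 1) := by
    calc |besselJ ν r| ≤ A * Real.exp B := h1
      _ ≤ ((ν/4) ^ ν / Real.Gamma (ν + 1)) * Real.exp (ν/16) := by
          apply mul_le_mul hAle (Real.exp_le_exp.mpr hBle) (Real.exp_pos _).le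
          positivity
      _ = (ν/4) ^ ν * Real.exp (ν/16) / Real.Gamma (ν + 1) := by ring
  -- Stirling-type lower bound
  have hstir := gamma_stirling_aux ν hν
  have hden : 0 < ν ^ (ν - 1) * Real.exp (-ν) := by
    have := Real.rpow_pos_of_pos hν0 (ν - 1)
    positivity
  have h3 : |besselJ ν r| ≤ (ν/4) ^ ν * Real.exp (ν/16) / (ν ^ (ν - 1) * Real.exp (-ν)) := by
    calc |besselJ ν r| ≤ (ν/4) ^ ν * Real.exp (ν/16) / Real.Gamma (ν + 1) := h2
      _ ≤ (ν/4) ^ ν * Real.exp (ν/16) / (ν ^ (ν - 1) * Real.exp (-ν)) := by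
          apply div_le_div_of_nonneg_left _ hden hstir
          have := Real.rpow_nonneg (by positivity : (0:ℝ) ≤ ν/4) ν
          positivity
  set c : ℝ := Real.log 4 - 17/16 with hcdef
  have hc : (1/4 : ℝ) ≤ c := by
    have h4 : Real.log 4 = 2 * Real.log 2 := by
      rw [show (4:ℝ) = 2^2 by norm_num, Real.log_pow]; push_cast; ring
    have hl2 := Real.log_two_gt_d9
    rw [hcdef, h4]; nlinarith
  have hνν : ν ^ ν = ν * ν ^ (ν - 1) := by
    rw [show ν * ν ^ (ν - 1) = ν ^ (1:ℝ) * ν ^ (ν - 1) by rw [Real.rpow_one],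
      ← Real.rpow_add hν0]
    norm_num
  have hE : (ν/4) ^ ν * Real.exp (ν/16) / (ν ^ (ν - 1) * Real.exp (-ν))
      = ν * Real.exp (-(c*ν)) := by
    rw [Real.div_rpow hν0.le (by norm_num : (0:ℝ) ≤ 4)]
    rw [show (4:ℝ) ^ ν = Real.exp (Real.log 4 * ν) from Real.rpow_def_of_pos (by norm_num) ν]
    rw [hνν]
    have hrp : ν ^ (ν - 1) ≠ 0 := (Real.rpow_pos_of_pos hν0 (ν - 1)).ne'
    rw [show Real.exp (-(c*ν)) = Real.exp (ν/16) * Real.exp ν / Real.exp (Real.log 4 * ν) by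
      rw [← Real.exp_add, ← Real.exp_sub]; congr 1; rw [hcdef]; ring]
    rw [Real.exp_neg]
    field_simp
  have hquad : ν^2 ≤ 32 * Real.exp (c*ν) := by
    have hq := Real.quadratic_le_exp_of_nonneg (by positivity : (0:ℝ) ≤ c*ν)
    nlinarith [hq, hc, hν0, sq_nonneg (c*ν - ν/4)]
  have h4 : ν * Real.exp (-(c*ν)) ≤ 32 / ν := by
    have hexppos := Real.exp_pos (c*ν)
    rw [Real.exp_neg, ← div_eq_mul_inv, div_le_div_iff₀ hexppos hν0]
    nlinarith
  calc |besselJ ν r| ≤ ν * Real.exp (-(c*ν)) := by rw [← hE]; exact h3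
    _ ≤ 32 / ν := h4
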